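/- For every r ≥ 1 and every function C : ℕ × ℕ → ℕ^r, there exist natural numbers x₁ < x₂ < x₃ such that C(x₁, x₂) ≤ C(x₂, x₃) in the coordinatewise order on ℕ^r. -/

import Mathlib

namespace AdjRamsey

variable {r : ℕ}

lemma descent (u : ℕ → ℕ) (h : ∀ n, u (n + 1) < u n) : False := by
  have key : ∀ n, u n + n ≤ u 0 := by
    intro n
    induction n with
    | zero => simp
    | succ k ih => have := h k; omega
  have := key (u 0 + 1); omega

lemma infinite_fiber {α : Type*} [Fintype α] (g : ℕ → α) {S : Set ℕ}
    (hS : S.Infinite) : ∃ a, {n | n ∈ S ∧ g n = a}.Infinite := by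
  by_contra h
  push_neg at h
  have h : ∀ a, {n | n ∈ S ∧ g n = a}.Finite := h
  have hsub : S ⊆ ⋃ a : α, {n | n ∈ S ∧ g n = a} := fun n hn => Set.mem_iUnion.2 ⟨g n, hn, rfl⟩
  exact hS ((Set.finite_iUnion h).subset hsub)

lemma infinite_gt {S : Set ℕ} (hS : S.Infinite) (k : ℕ) :
    {s | s ∈ S ∧ k < s}.Infinite := by
  have he : {s | s ∈ S ∧ k < s} = S \ Set.Iic k := by
    ext s; simp [Set.mem_Iic, Nat.not_le]
  rw [he]; exact hS.diff (Set.finite_Iic k)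

/-! ### The triple-step construction -/

lemma step_ex (c : ℕ → ℕ → ℕ → Fin r) (a : ℕ → ℕ) (n : ℕ) {S : Set ℕ} (hS : S.Infinite) :
    ∃ T : Set ℕ, T.Infinite ∧ T ⊆ S ∧ (∀ s ∈ T, sInf S < s) ∧
      ∀ s ∈ T, ∀ t ∈ T, ∀ j, j < n → c (a j) (sInf S) s = c (a j) (sInf S) t := by
  obtain ⟨d, hd⟩ :=
    infinite_fiber (fun s (j : Fin n) => c (a j) (sInf S) s) (infinite_gt hS (sInf S))
  refine ⟨_, hd, fun s hs => hs.1.1, fun s hs => hs.1.2, ?_⟩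
  intro s hs t ht j hj
  have h1 := congrFun hs.2 ⟨j, hj⟩
  have h2 := congrFun ht.2 ⟨j, hj⟩
  simp only at h1 h2
  rw [h1, h2]

noncomputable def stp (c : ℕ → ℕ → ℕ → Fin r)
    (p : (ℕ → ℕ) × ℕ × {S : Set ℕ // S.Infinite}) :
    (ℕ → ℕ) × ℕ × {S : Set ℕ // S.Infinite} :=
  (Function.update p.1 p.2.1 (sInf p.2.2.1), p.2.1 + 1,
    ⟨(step_ex c p.1 p.2.1 p.2.2.2).choose, (step_ex c p.1 p.2.1 p.2.2.2).choose_spec.1⟩)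

noncomputable def st (c : ℕ → ℕ → ℕ → Fin r) : ℕ → (ℕ → ℕ) × ℕ × {S : Set ℕ // S.Infinite}
  | 0 => (fun _ => 0, 0, ⟨Set.univ, Set.infinite_univ⟩)
  | n + 1 => stp c (st c n)

noncomputable def aa (c : ℕ → ℕ → ℕ → Fin r) (n : ℕ) : ℕ := sInf (st c n).2.2.1

lemma st_sub (c : ℕ → ℕ → ℕ → Fin r) (n : ℕ) :
    (st c (n + 1)).2.2.1 ⊆ (st c n).2.2.1 :=
  (step_ex c (st c n).1 (st c n).2.1 (st c n).2.2.2).choose_spec.2.1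

lemma st_gt (c : ℕ → ℕ → ℕ → Fin r) (n : ℕ) :
    ∀ s ∈ (st c (n + 1)).2.2.1, aa c n < s :=
  (step_ex c (st c n).1 (st c n).2.1 (st c n).2.2.2).choose_spec.2.2.1

lemma st_const (c : ℕ → ℕ → ℕ → Fin r) (n : ℕ) :
    ∀ s ∈ (st c (n + 1)).2.2.1, ∀ t ∈ (st c (n + 1)).2.2.1, ∀ j, j < (st c n).2.1 →
      c ((st c n).1 j) (aa c n) s = c ((st c n).1 j) (aa c n) t :=
  (step_ex c (st c n).1 (st c n).2.1 (st c n).2.2.2).choose_spec.2.2.2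

lemma st_cnt (c : ℕ → ℕ → ℕ → Fin r) : ∀ n, (st c n).2.1 = n := by
  intro n
  induction n with
  | zero => rfl
  | succ k ih => show (stp c (st c k)).2.1 = k + 1; rw [show (stp c (st c k)).2.1 = (st c k).2.1 + 1 from rfl, ih]

lemma st_hist (c : ℕ → ℕ → ℕ → Fin r) : ∀ n, ∀ j < n, (st c n).1 j = aa c j := by
  intro n
  induction n with
  | zero => intro j hj; omega
  | succ k ih =>
    intro j hj
    have h1 : (st c (k + 1)).1 = Function.update (st c k).1 (st c k).2.1 (sInf (st c k).2.2.1) :=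
      rfl
    rw [h1, st_cnt]
    rcases Nat.lt_succ_iff_lt_or_eq.1 hj with h | h
    · rw [Function.update_of_ne (by omega), ih j h]
    · subst h
      rw [Function.update_self]
      rfl

lemma st_chain (c : ℕ → ℕ → ℕ → Fin r) {k m : ℕ} (h : k ≤ m) :
    (st c m).2.2.1 ⊆ (st c k).2.2.1 := by
  induction m with
  | zero => have : k = 0 := by omega
            subst this; exact fun s hs => hs
  | succ n ih =>
    rcases Nat.le_succ_iff.mp h with h' | h'
    · exact fun s hs => ih h' (st_sub c n hs)
    · subst h'; exact fun s hs => hs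

lemma aa_mem (c : ℕ → ℕ → ℕ → Fin r) (n : ℕ) : aa c n ∈ (st c n).2.2.1 :=
  Nat.sInf_mem (st c n).2.2.2.nonempty

lemma aa_mono (c : ℕ → ℕ → ℕ → Fin r) : StrictMono (aa c) := by
  intro n m h
  exact st_gt c n (aa c m) (st_chain c h (aa_mem c m))

lemma key1 (c : ℕ → ℕ → ℕ → Fin r) {j n l l' : ℕ} (hj : j < n) (hl : n < l) (hl' : n < l') :
    c (aa c j) (aa c n) (aa c l) = c (aa c j) (aa c n) (aa c l') := by
  have hml : aa c l ∈ (st c (n + 1)).2.2.1 := st_chain c hl (aa_mem c l)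
  have hml' : aa c l' ∈ (st c (n + 1)).2.2.1 := st_chain c hl' (aa_mem c l')
  have := st_const c n (aa c l) hml (aa c l') hml' j (by rw [st_cnt]; exact hj)
  rwa [st_hist c n j hj] at this

/-! ### The pair-step construction -/

lemma step2_ex (D : ℕ → ℕ → Fin r) {S : Set ℕ} (hS : S.Infinite) :
    ∃ T : Set ℕ, T.Infinite ∧ T ⊆ S ∧ (∀ s ∈ T, sInf S < s) ∧
      ∀ s ∈ T, ∀ t ∈ T, D (sInf S) s = D (sInf S) t := by
  obtain ⟨d, hd⟩ := infinite_fiber (fun s => D (sInf S) s) (infinite_gt hS (sInf S))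
  refine ⟨_, hd, fun s hs => hs.1.1, fun s hs => hs.1.2, ?_⟩
  intro s hs t ht
  rw [hs.2, ht.2]

noncomputable def st2 (D : ℕ → ℕ → Fin r) : ℕ → {S : Set ℕ // S.Infinite}
  | 0 => ⟨Set.univ, Set.infinite_univ⟩
  | n + 1 => ⟨(step2_ex D (st2 D n).2).choose, (step2_ex D (st2 D n).2).choose_spec.1⟩

noncomputable def bb (D : ℕ → ℕ → Fin r) (n : ℕ) : ℕ := sInf (st2 D n).1

lemma st2_sub (D : ℕ → ℕ → Fin r) (n : ℕ) : (st2 D (n + 1)).1 ⊆ (st2 D n).1 :=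
  (step2_ex D (st2 D n).2).choose_spec.2.1

lemma st2_gt (D : ℕ → ℕ → Fin r) (n : ℕ) : ∀ s ∈ (st2 D (n + 1)).1, bb D n < s :=
  (step2_ex D (st2 D n).2).choose_spec.2.2.1

lemma st2_const (D : ℕ → ℕ → Fin r) (n : ℕ) :
    ∀ s ∈ (st2 D (n + 1)).1, ∀ t ∈ (st2 D (n + 1)).1, D (bb D n) s = D (bb D n) t :=
  (step2_ex D (st2 D n).2).choose_spec.2.2.2

lemma st2_chain (D : ℕ → ℕ → Fin r) {k m : ℕ} (h : k ≤ m) : (st2 D m).1 ⊆ (st2 D k).1 := by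
  induction m with
  | zero => have : k = 0 := by omega
            subst this; exact fun s hs => hs
  | succ n ih =>
    rcases Nat.le_succ_iff.mp h with h' | h'
    · exact fun s hs => ih h' (st2_sub D n hs)
    · subst h'; exact fun s hs => hs

lemma bb_mem (D : ℕ → ℕ → Fin r) (n : ℕ) : bb D n ∈ (st2 D n).1 :=
  Nat.sInf_mem (st2 D n).2.nonempty

lemma bb_mono (D : ℕ → ℕ → Fin r) : StrictMono (bb D) := by
  intro n m h
  exact st2_gt D n (bb D m) (st2_chain D h (bb_mem D m))

lemma key2 (D : ℕ → ℕ → Fin r) {n l l' : ℕ} (hl : n < l) (hl' : n < l') :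
    D (bb D n) (bb D l) = D (bb D n) (bb D l') :=
  st2_const D n (bb D l) (st2_chain D hl (bb_mem D l)) (bb D l') (st2_chain D hl' (bb_mem D l'))

/-! ### Infinite Ramsey for (ordered) triples with `r` colors -/

lemma ramsey3 (c : ℕ → ℕ → ℕ → Fin r) :
    ∃ (F : ℕ → ℕ) (i : Fin r), StrictMono F ∧
      ∀ m₁ m₂ m₃, m₁ < m₂ → m₂ < m₃ → c (F m₁) (F m₂) (F m₃) = i := by
  set D : ℕ → ℕ → Fin r := fun j k => c (aa c j) (aa c k) (aa c (k + 1)) with hD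
  set e : ℕ → Fin r := fun n => D (bb D n) (bb D (n + 1)) with he
  obtain ⟨i, hi⟩ := infinite_fiber e Set.infinite_univ
  have hp : {n | e n = i}.Infinite := by
    have : {n | n ∈ Set.univ ∧ e n = i} = {n | e n = i} := by ext n; simp
    rwa [this] at hi
  set p : ℕ → Prop := fun n => e n = i with hp'
  have hpinf : (setOf p).Infinite := hp
  refine ⟨fun m => aa c (bb D (Nat.nth p m)), i, ?_, ?_⟩
  · exact (aa_mono c).comp ((bb_mono D).comp (Nat.nth_strictMono hpinf))
  · intro m₁ m₂ m₃ h12 h23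
    set n₁ := Nat.nth p m₁
    set n₂ := Nat.nth p m₂
    set n₃ := Nat.nth p m₃
    have hn12 : n₁ < n₂ := Nat.nth_strictMono hpinf h12
    have hn23 : n₂ < n₃ := Nat.nth_strictMono hpinf h23
    have hb12 : bb D n₁ < bb D n₂ := bb_mono D hn12
    have hb23 : bb D n₂ < bb D n₃ := bb_mono D hn23
    have e1 : c (aa c (bb D n₁)) (aa c (bb D n₂)) (aa c (bb D n₃))
        = c (aa c (bb D n₁)) (aa c (bb D n₂)) (aa c (bb D n₂ + 1)) :=
      key1 c hb12 hb23 (Nat.lt_succ_self _)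
    have e2 : D (bb D n₁) (bb D n₂) = D (bb D n₁) (bb D (n₁ + 1)) :=
      key2 D hn12 (Nat.lt_succ_self _)
    have e3 : p n₁ := Nat.nth_mem_of_infinite hpinf m₁
    calc c (aa c (bb D n₁)) (aa c (bb D n₂)) (aa c (bb D n₃))
        = D (bb D n₁) (bb D n₂) := e1
      _ = e n₁ := e2
      _ = i := e3

end AdjRamsey

/-- Infinite adjacent Ramsey theorem for pairs with codimension `r`:
for every `C : ℕ × ℕ → ℕ^r` there are `x₁ < x₂ < x₃` with
`C (x₁, x₂) ≤ C (x₂, x₃)` coordinatewise. -/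
theorem adjacentRamsey_pairs (r : ℕ) (hr : 1 ≤ r) (C : ℕ × ℕ → (Fin r → ℕ)) :
    ∃ x₁ x₂ x₃ : ℕ, x₁ < x₂ ∧ x₂ < x₃ ∧ C (x₁, x₂) ≤ C (x₂, x₃) := by
  by_contra hcon
  push_neg at hcon
  have hw : ∀ x y z : ℕ, x < y → y < z → ∃ i, C (y, z) i < C (x, y) i := by
    intro x y z hxy hyz
    have := hcon x y z hxy hyz
    rw [Pi.le_def] at this
    push_neg at this
    obtain ⟨i, hi⟩ := this
    exact ⟨i, hi⟩
  classical
  set c : ℕ → ℕ → ℕ → Fin r := fun x y z =>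
    if h : x < y ∧ y < z then (hw x y z h.1 h.2).choose else ⟨0, hr⟩ with hc
  have hcspec : ∀ x y z (hxy : x < y) (hyz : y < z),
      C (y, z) (c x y z) < C (x, y) (c x y z) := by
    intro x y z hxy hyz
    rw [hc]
    simp only [dif_pos (And.intro hxy hyz)]
    exact (hw x y z hxy hyz).choose_spec
  obtain ⟨F, i, hF, hhom⟩ := AdjRamsey.ramsey3 c
  have hdec : ∀ m, C (F (m + 1), F (m + 2)) i < C (F m, F (m + 1)) i := by
    intro m
    have h1 : F m < F (m + 1) := hF (Nat.lt_succ_self m)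
    have h2 : F (m + 1) < F (m + 2) := hF (Nat.lt_succ_self (m + 1))
    have := hcspec (F m) (F (m + 1)) (F (m + 2)) h1 h2
    rwa [hhom m (m + 1) (m + 2) (Nat.lt_succ_self m) (Nat.lt_succ_self (m + 1))] at this
  exact AdjRamsey.descent (fun m => C (F m, F (m + 1)) i) hdec
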